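/- arXiv:2303.13333 — 8 statements merged into one kernel-verified Lean document; each statement's English description precedes it below -/
import Mathlib

section
/- The Sergeev map T(x,y,z) = (xy/(y+xz), xz/k, (y+xz)/x) on triples of nonzero complex numbers satisfies the functional tetrahedron (Zamolodchikov) equation T^{123} ∘ T^{145} ∘ T^{246} ∘ T^{356} = T^{356} ∘ T^{246} ∘ T^{145} ∘ T^{123} as maps on six-tuples, wherever all denominators are nonzero. -/
/-- The Sergeev tetrahedron map `T(x,y,z) = (xy/(y+xz), xz/k, (y+xz)/x)`. -/
noncomputable def sergeevT (k : ℂ) : ℂ × ℂ × ℂ → ℂ × ℂ × ℂ :=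
  fun (x, y, z) => (x * y / (y + x * z), x * z / k, (y + x * z) / x)

/-- The denominators occurring in the Sergeev map are nonzero. -/
def sergeevOk : ℂ × ℂ × ℂ → Prop :=
  fun (x, y, _z) => y + x * (_z) ≠ 0 ∧ x ≠ 0

section Lifts
variable (T : ℂ × ℂ × ℂ → ℂ × ℂ × ℂ)

/-- `T` acting on coordinates 1,2,3 of a 6-tuple. -/
def lift123 : ℂ × ℂ × ℂ × ℂ × ℂ × ℂ → ℂ × ℂ × ℂ × ℂ × ℂ × ℂ :=
  fun (a, b, c, d, e, f) =>
    let t := T (a, b, c); (t.1, t.2.1, t.2.2, d, e, f)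

/-- `T` acting on coordinates 1,4,5 of a 6-tuple. -/
def lift145 : ℂ × ℂ × ℂ × ℂ × ℂ × ℂ → ℂ × ℂ × ℂ × ℂ × ℂ × ℂ :=
  fun (a, b, c, d, e, f) =>
    let t := T (a, d, e); (t.1, b, c, t.2.1, t.2.2, f)

/-- `T` acting on coordinates 2,4,6 of a 6-tuple. -/
def lift246 : ℂ × ℂ × ℂ × ℂ × ℂ × ℂ → ℂ × ℂ × ℂ × ℂ × ℂ × ℂ :=
  fun (a, b, c, d, e, f) =>
    let t := T (b, d, f); (a, t.1, c, t.2.1, e, t.2.2)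

/-- `T` acting on coordinates 3,5,6 of a 6-tuple. -/
def lift356 : ℂ × ℂ × ℂ × ℂ × ℂ × ℂ → ℂ × ℂ × ℂ × ℂ × ℂ × ℂ :=
  fun (a, b, c, d, e, f) =>
    let t := T (c, e, f); (a, b, t.1, d, t.2.1, t.2.2)

end Lifts

/-- Projection on coordinates 1,2,3. -/
def proj123 : ℂ × ℂ × ℂ × ℂ × ℂ × ℂ → ℂ × ℂ × ℂ :=
  fun (a, b, c, _, _, _) => (a, b, c)

/-- Projection on coordinates 1,4,5. -/
def proj145 : ℂ × ℂ × ℂ × ℂ × ℂ × ℂ → ℂ × ℂ × ℂ :=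
  fun (a, _, _, d, e, _) => (a, d, e)

/-- Projection on coordinates 2,4,6. -/
def proj246 : ℂ × ℂ × ℂ × ℂ × ℂ × ℂ → ℂ × ℂ × ℂ :=
  fun (_, b, _, d, _, f) => (b, d, f)

/-- Projection on coordinates 3,5,6. -/
def proj356 : ℂ × ℂ × ℂ × ℂ × ℂ × ℂ → ℂ × ℂ × ℂ :=
  fun (_, _, c, _, e, f) => (c, e, f)

set_option maxHeartbeats 1000000

/-- The Sergeev map satisfies the functional tetrahedron (Zamolodchikov) equation,
wherever all denominators arising in the compositions are nonzero. -/
theorem sergeev_tetrahedron (k : ℂ) (hk : k ≠ 0) (p : ℂ × ℂ × ℂ × ℂ × ℂ × ℂ)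
    (h1 : sergeevOk (proj356 p))
    (h2 : sergeevOk (proj246 (lift356 (sergeevT k) p)))
    (h3 : sergeevOk (proj145 (lift246 (sergeevT k) (lift356 (sergeevT k) p))))
    (h4 : sergeevOk (proj123 (lift145 (sergeevT k) (lift246 (sergeevT k) (lift356 (sergeevT k) p)))))
    (h5 : sergeevOk (proj123 p))
    (h6 : sergeevOk (proj145 (lift123 (sergeevT k) p)))
    (h7 : sergeevOk (proj246 (lift145 (sergeevT k) (lift123 (sergeevT k) p))))
    (h8 : sergeevOk (proj356 (lift246 (sergeevT k) (lift145 (sergeevT k) (lift123 (sergeevT k) p))))) :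
    lift123 (sergeevT k) (lift145 (sergeevT k) (lift246 (sergeevT k) (lift356 (sergeevT k) p)))
      = lift356 (sergeevT k) (lift246 (sergeevT k) (lift145 (sergeevT k) (lift123 (sergeevT k) p))) := by
  obtain ⟨a, b, c, d, e, f⟩ := p
  simp only [sergeevOk, sergeevT, lift123, lift145, lift246, lift356, proj123, proj145,
    proj246, proj356] at h1 h2 h3 h5 h6
  clear h4 h7 h8
  obtain ⟨hE1, hc⟩ := h1
  obtain ⟨h2a, hb⟩ := h2
  obtain ⟨h3a, ha⟩ := h3
  obtain ⟨hF1, -⟩ := h5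
  obtain ⟨h6a, -⟩ := h6
  have hE2 : c * d + b * (e + c * f) ≠ 0 := by
    intro h
    apply h2a
    rw [show d + b * ((e + c * f) / c) = (c * d + b * (e + c * f)) / c by field_simp,
      h, zero_div]
  have hE3 : b * (e + c * f) + a * (c * c * f) ≠ 0 := by
    intro h
    apply h3a
    rw [show b * ((e + c * f) / c) / k + a * (c * f / k)
        = (b * (e + c * f) + a * (c * c * f)) / (c * k) by field_simp, h, zero_div]
  have hF2 : b * d + a * c * d + a * b * e ≠ 0 := by
    intro h
    apply h6a
    rw [show d + a * b / (b + a * c) * e = (b * d + a * c * d + a * b * e) / (b + a * c) by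
      field_simp, h, zero_div]
  have hE4' : d * (b * (e + c * f) + a * (c * c * f)) + a * e * (c * d + b * (e + c * f))
      = (e + c * f) * (b * d + a * c * d + a * b * e) := by ring
  have hF4' : c * (b * d + a * c * d + a * b * e) + b * (b * (e + c * f) + a * (c * c * f))
      = (c * d + b * (e + c * f)) * (b + a * c) := by ring
  have hx1 : d * c + b * (e + c * f) ≠ 0 := by intro h; exact hE2 (by linear_combination h)
  have hE4 : d * (b * (e + c * f) + a * (c * c * f)) + a * e * (c * d + b * (e + c * f)) ≠ 0 := by
    rw [hE4']; exact mul_ne_zero hE1 hF2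
  have hF4 : c * (b * d + a * c * d + a * b * e) + b * (b * (e + c * f) + a * (c * c * f)) ≠ 0 := by
    rw [hF4']; exact mul_ne_zero hE2 hF1
  have hs1 : lift356 (sergeevT k) (a, b, c, d, e, f)
      = (a, b, c * e / (e + c * f), d, c * f / k, (e + c * f) / c) := rfl
  have hs2 : lift246 (sergeevT k) (a, b, c * e / (e + c * f), d, c * f / k, (e + c * f) / c)
      = (a, b * c * d / (c * d + b * (e + c * f)), c * e / (e + c * f),
         b * (e + c * f) / (c * k), c * f / k, (c * d + b * (e + c * f)) / (b * c)) := by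
    simp only [lift246, sergeevT]
    rw [show d + b * ((e + c * f) / c) = (c * d + b * (e + c * f)) / c by field_simp]
    refine Prod.ext rfl (Prod.ext ?_ (Prod.ext rfl (Prod.ext ?_ (Prod.ext rfl ?_)))) <;>
      simp only <;> field_simp <;> (first | ring1 | exact Or.inl (by ring1))
  have hs3 : lift145 (sergeevT k) (a, b * c * d / (c * d + b * (e + c * f)), c * e / (e + c * f),
         b * (e + c * f) / (c * k), c * f / k, (c * d + b * (e + c * f)) / (b * c))
      = (a * b * (e + c * f) / (b * (e + c * f) + a * (c * c * f)),
         b * c * d / (c * d + b * (e + c * f)), c * e / (e + c * f),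
         a * c * f / (k * k), (b * (e + c * f) + a * (c * c * f)) / (a * (c * k)),
         (c * d + b * (e + c * f)) / (b * c)) := by
    simp only [lift145, sergeevT]
    rw [show b * (e + c * f) / (c * k) + a * (c * f / k)
        = (b * (e + c * f) + a * (c * c * f)) / (c * k) by field_simp]
    refine Prod.ext ?_ (Prod.ext rfl (Prod.ext rfl (Prod.ext ?_ (Prod.ext ?_ rfl)))) <;>
      simp only <;> field_simp <;> (first | ring1 | exact Or.inl (by ring1))
  have hs4 : lift123 (sergeevT k) (a * b * (e + c * f) / (b * (e + c * f) + a * (c * c * f)),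
         b * c * d / (c * d + b * (e + c * f)), c * e / (e + c * f),
         a * c * f / (k * k), (b * (e + c * f) + a * (c * c * f)) / (a * (c * k)),
         (c * d + b * (e + c * f)) / (b * c))
      = (a * b * d * (e + c * f)
           / (d * (b * (e + c * f) + a * (c * c * f)) + a * e * (c * d + b * (e + c * f))),
         a * b * c * e / (k * (b * (e + c * f) + a * (c * c * f))),
         c * (d * (b * (e + c * f) + a * (c * c * f)) + a * e * (c * d + b * (e + c * f)))
           / (a * ((e + c * f) * (c * d + b * (e + c * f)))),
         a * c * f / (k * k), (b * (e + c * f) + a * (c * c * f)) / (a * (c * k)),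
         (c * d + b * (e + c * f)) / (b * c)) := by
    simp only [lift123, sergeevT]
    rw [show b * c * d / (c * d + b * (e + c * f))
          + a * b * (e + c * f) / (b * (e + c * f) + a * (c * c * f)) * (c * e / (e + c * f))
        = (b * (c * ((e + c * f)
              * (d * (b * (e + c * f) + a * (c * c * f)) + a * e * (c * d + b * (e + c * f))))))
          / ((e + c * f) * ((c * d + b * (e + c * f))
              * (b * (e + c * f) + a * (c * c * f)))) by have h' : b * (e + c * f) + c ^ 2 * f * a ≠ 0 := fun h => hE3 (by linear_combination h); field_simp]
    refine Prod.ext ?_ (Prod.ext ?_ (Prod.ext ?_ rfl)) <;> simp only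
    · rw [div_div_eq_mul_div, div_eq_div_iff
        (mul_ne_zero hb (mul_ne_zero hc (mul_ne_zero hE1 hE4))) hE4]
      have h' : b * (e + c * f) + a * c ^ 2 * f ≠ 0 := by (intro h; exact hE3 (by linear_combination h))
      field_simp
    · field_simp
    · rw [div_eq_div_iff (div_ne_zero (mul_ne_zero (mul_ne_zero ha hb) hE1) hE3)
        (mul_ne_zero ha (mul_ne_zero hE1 hE2))]
      field_simp
  have hr1 : lift123 (sergeevT k) (a, b, c, d, e, f)
      = (a * b / (b + a * c), a * c / k, (b + a * c) / a, d, e, f) := rfl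
  have hr2 : lift145 (sergeevT k) (a * b / (b + a * c), a * c / k, (b + a * c) / a, d, e, f)
      = (a * b * d / (b * d + a * c * d + a * b * e), a * c / k, (b + a * c) / a,
         a * b * e / (k * (b + a * c)), (b * d + a * c * d + a * b * e) / (a * b), f) := by
    simp only [lift145, sergeevT]
    rw [show d + a * b / (b + a * c) * e
        = (b * d + a * c * d + a * b * e) / (b + a * c) by field_simp]
    refine Prod.ext ?_ (Prod.ext rfl (Prod.ext rfl (Prod.ext ?_ (Prod.ext ?_ rfl)))) <;>
      simp only <;> field_simp <;> (first | ring1 | exact Or.inl (by ring1))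
  have hr3 : lift246 (sergeevT k) (a * b * d / (b * d + a * c * d + a * b * e), a * c / k,
         (b + a * c) / a, a * b * e / (k * (b + a * c)),
         (b * d + a * c * d + a * b * e) / (a * b), f)
      = (a * b * d / (b * d + a * c * d + a * b * e),
         a * b * c * e / (k * (b * (e + c * f) + a * (c * c * f))), (b + a * c) / a,
         a * c * f / (k * k), (b * d + a * c * d + a * b * e) / (a * b),
         (b * (e + c * f) + a * (c * c * f)) / (c * (b + a * c))) := by
    simp only [lift246, sergeevT]
    rw [show a * b * e / (k * (b + a * c)) + a * c / k * f
        = (a * (b * (e + c * f) + a * (c * c * f))) / (k * (b + a * c)) by field_simp; first | ring1 | exact Or.inl (by ring1)]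
    refine Prod.ext rfl (Prod.ext ?_ (Prod.ext rfl (Prod.ext ?_ (Prod.ext rfl ?_)))) <;>
      simp only <;> field_simp <;> (first | ring1 | exact Or.inl (by ring1))
  have hr4 : lift356 (sergeevT k) (a * b * d / (b * d + a * c * d + a * b * e),
         a * b * c * e / (k * (b * (e + c * f) + a * (c * c * f))), (b + a * c) / a,
         a * c * f / (k * k), (b * d + a * c * d + a * b * e) / (a * b),
         (b * (e + c * f) + a * (c * c * f)) / (c * (b + a * c)))
      = (a * b * d / (b * d + a * c * d + a * b * e),
         a * b * c * e / (k * (b * (e + c * f) + a * (c * c * f))),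
         c * (b + a * c) * (b * d + a * c * d + a * b * e)
           / (a * (c * (b * d + a * c * d + a * b * e)
               + b * (b * (e + c * f) + a * (c * c * f)))),
         a * c * f / (k * k),
         (b * (e + c * f) + a * (c * c * f)) / (a * (c * k)),
         (c * (b * d + a * c * d + a * b * e) + b * (b * (e + c * f) + a * (c * c * f)))
           / (b * (c * (b + a * c)))) := by
    simp only [lift356, sergeevT]
    rw [show (b * d + a * c * d + a * b * e) / (a * b)
          + (b + a * c) / a * ((b * (e + c * f) + a * (c * c * f)) / (c * (b + a * c)))
        = ((b + a * c) * (c * (b * d + a * c * d + a * b * e)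
              + b * (b * (e + c * f) + a * (c * c * f))))
          / (a * (b * (c * (b + a * c)))) by field_simp]
    refine Prod.ext rfl (Prod.ext rfl (Prod.ext ?_ (Prod.ext rfl (Prod.ext ?_ ?_)))) <;>
      simp only
    · rw [div_div_eq_mul_div, div_eq_div_iff (mul_ne_zero hF1 hF4) (mul_ne_zero ha hF4)]
      field_simp
    · field_simp
    · rw [div_eq_div_iff (div_ne_zero hF1 ha) (mul_ne_zero hb (mul_ne_zero hc hF1))]
      field_simp
  rw [hs1, hs2, hs3, hs4, hr1, hr2, hr3, hr4]
  refine Prod.ext ?_ (Prod.ext rfl (Prod.ext ?_ (Prod.ext rfl (Prod.ext rfl ?_))))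
  · simp only
    rw [div_eq_div_iff hE4 hF2]
    ring
  · simp only
    rw [div_eq_div_iff (mul_ne_zero ha (mul_ne_zero hE1 hE2)) (mul_ne_zero ha hF4)]
    linear_combination (c * a * (b * d + a * c * d + a * b * e) * (b + a * c)) * hE4' -
      (c * a * (e + c * f) * (b * d + a * c * d + a * b * e)) * hF4'
  · simp only
    rw [div_eq_div_iff (mul_ne_zero hb hc) (mul_ne_zero hb (mul_ne_zero hc hF1))]
    linear_combination (b * c) * hF4'
end

section
/- The map S₂(x₁,x₂,y₁,y₂,z₁,z₂,t₁,t₂) = (x₁y₁z₂/(x₁z₁+y₁z₂), x₂, x₁z₁/k, z₂, x₂(x₁z₁+y₁z₂)/(x₁z₂), y₂, t₁z₂/x₂, t₂z₂/y₂) on ℂ⁸ satisfies the set-theoretical 4-simplex equation, wherever all denominators are nonzero. -/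
/-- The Sergeev-type 4-simplex map `S₂`. -/
noncomputable def sergeevS2 (k : ℂ) :
    (ℂ × ℂ) × (ℂ × ℂ) × (ℂ × ℂ) × (ℂ × ℂ) → (ℂ × ℂ) × (ℂ × ℂ) × (ℂ × ℂ) × (ℂ × ℂ) :=
  fun ((x1, x2), (y1, y2), (z1, z2), (t1, t2)) =>
    ((x1 * y1 * z2 / (x1 * z1 + y1 * z2), x2),
     (x1 * z1 / k, z2),
     (x2 * (x1 * z1 + y1 * z2) / (x1 * z2), y2),
     (t1 * z2 / x2, t2 * z2 / y2))

/-- All denominators occurring in `S₂` are nonzero. -/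
def sergeevS2Ok : (ℂ × ℂ) × (ℂ × ℂ) × (ℂ × ℂ) × (ℂ × ℂ) → Prop :=
  fun ((x1, x2), (y1, y2), (z1, z2), (t1, t2)) =>
    x1 * z1 + y1 * z2 ≠ 0 ∧ x1 ≠ 0 ∧ z2 ≠ 0 ∧ x2 ≠ 0 ∧ y2 ≠ 0

section Lifts
variable {X : Type*} (S : X × X × X × X → X × X × X × X)

/-- `S` acting on factors 1,2,3,4 of a 10-tuple. -/
def lift1234 : X × X × X × X × X × X × X × X × X × X → X × X × X × X × X × X × X × X × X × X :=
  fun (p1, p2, p3, p4, p5, p6, p7, p8, p9, p10) =>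
    let q := S (p1, p2, p3, p4)
    (q.1, q.2.1, q.2.2.1, q.2.2.2, p5, p6, p7, p8, p9, p10)

/-- `S` acting on factors 1,5,6,7 of a 10-tuple. -/
def lift1567 : X × X × X × X × X × X × X × X × X × X → X × X × X × X × X × X × X × X × X × X :=
  fun (p1, p2, p3, p4, p5, p6, p7, p8, p9, p10) =>
    let q := S (p1, p5, p6, p7)
    (q.1, p2, p3, p4, q.2.1, q.2.2.1, q.2.2.2, p8, p9, p10)

/-- `S` acting on factors 2,5,8,9 of a 10-tuple. -/
def lift2589 : X × X × X × X × X × X × X × X × X × X → X × X × X × X × X × X × X × X × X × X :=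
  fun (p1, p2, p3, p4, p5, p6, p7, p8, p9, p10) =>
    let q := S (p2, p5, p8, p9)
    (p1, q.1, p3, p4, q.2.1, p6, p7, q.2.2.1, q.2.2.2, p10)

/-- `S` acting on factors 3,6,8,10 of a 10-tuple. -/
def lift368X : X × X × X × X × X × X × X × X × X × X → X × X × X × X × X × X × X × X × X × X :=
  fun (p1, p2, p3, p4, p5, p6, p7, p8, p9, p10) =>
    let q := S (p3, p6, p8, p10)
    (p1, p2, q.1, p4, p5, q.2.1, p7, q.2.2.1, p9, q.2.2.2)

/-- `S` acting on factors 4,7,9,10 of a 10-tuple. -/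
def lift479X : X × X × X × X × X × X × X × X × X × X → X × X × X × X × X × X × X × X × X × X :=
  fun (p1, p2, p3, p4, p5, p6, p7, p8, p9, p10) =>
    let q := S (p4, p7, p9, p10)
    (p1, p2, p3, q.1, p5, p6, q.2.1, p8, q.2.2.1, q.2.2.2)

end Lifts

section Projs
variable {X : Type*}

/-- Projection on factors 1,2,3,4. -/
def proj1234 : X × X × X × X × X × X × X × X × X × X → X × X × X × X :=
  fun (p1, p2, p3, p4, _, _, _, _, _, _) => (p1, p2, p3, p4)

/-- Projection on factors 1,5,6,7. -/
def proj1567 : X × X × X × X × X × X × X × X × X × X → X × X × X × X :=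
  fun (p1, _, _, _, p5, p6, p7, _, _, _) => (p1, p5, p6, p7)

/-- Projection on factors 2,5,8,9. -/
def proj2589 : X × X × X × X × X × X × X × X × X × X → X × X × X × X :=
  fun (_, p2, _, _, p5, _, _, p8, p9, _) => (p2, p5, p8, p9)

/-- Projection on factors 3,6,8,10. -/
def proj368X : X × X × X × X × X × X × X × X × X × X → X × X × X × X :=
  fun (_, _, p3, _, _, p6, _, p8, _, p10) => (p3, p6, p8, p10)

/-- Projection on factors 4,7,9,10. -/
def proj479X : X × X × X × X × X × X × X × X × X × X → X × X × X × X :=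
  fun (_, _, _, p4, _, _, p7, _, p9, p10) => (p4, p7, p9, p10)

end Projs

set_option maxHeartbeats 4000000

/-- `S₂` satisfies the set-theoretical 4-simplex equation,
wherever all denominators are nonzero. -/
theorem sergeevS2_four_simplex (k : ℂ) (hk : k ≠ 0)
    (p : (ℂ × ℂ) × (ℂ × ℂ) × (ℂ × ℂ) × (ℂ × ℂ) × (ℂ × ℂ) × (ℂ × ℂ) × (ℂ × ℂ) × (ℂ × ℂ) × (ℂ × ℂ) × (ℂ × ℂ))
    (h1 : sergeevS2Ok (proj479X p))
    (h2 : sergeevS2Ok (proj368X (lift479X (sergeevS2 k) p)))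
    (h3 : sergeevS2Ok (proj2589 (lift368X (sergeevS2 k) (lift479X (sergeevS2 k) p))))
    (h4 : sergeevS2Ok (proj1567 (lift2589 (sergeevS2 k) (lift368X (sergeevS2 k) (lift479X (sergeevS2 k) p)))))
    (h5 : sergeevS2Ok (proj1234 (lift1567 (sergeevS2 k) (lift2589 (sergeevS2 k) (lift368X (sergeevS2 k) (lift479X (sergeevS2 k) p))))))
    (h6 : sergeevS2Ok (proj1234 p))
    (h7 : sergeevS2Ok (proj1567 (lift1234 (sergeevS2 k) p)))
    (h8 : sergeevS2Ok (proj2589 (lift1567 (sergeevS2 k) (lift1234 (sergeevS2 k) p))))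
    (h9 : sergeevS2Ok (proj368X (lift2589 (sergeevS2 k) (lift1567 (sergeevS2 k) (lift1234 (sergeevS2 k) p)))))
    (h10 : sergeevS2Ok (proj479X (lift368X (sergeevS2 k) (lift2589 (sergeevS2 k) (lift1567 (sergeevS2 k) (lift1234 (sergeevS2 k) p)))))) :
    lift1234 (sergeevS2 k) (lift1567 (sergeevS2 k) (lift2589 (sergeevS2 k) (lift368X (sergeevS2 k) (lift479X (sergeevS2 k) p))))
      = lift479X (sergeevS2 k) (lift368X (sergeevS2 k) (lift2589 (sergeevS2 k) (lift1567 (sergeevS2 k) (lift1234 (sergeevS2 k) p)))) := by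

  obtain ⟨⟨x1,x2⟩,⟨y1,y2⟩,⟨z1,z2⟩,⟨t1,t2⟩,⟨a1,a2⟩,⟨b1,b2⟩,⟨c1,c2⟩,⟨d1,d2⟩,⟨e1,e2⟩,⟨f1,f2⟩⟩ := p
  simp only [sergeevS2, sergeevS2Ok, lift1234, lift1567, lift2589, lift368X, lift479X,
    proj1234, proj1567, proj2589, proj368X, proj479X] at *
  obtain ⟨h1a,h1b,h1c,h1d,h1e⟩ := h1
  obtain ⟨h2a,h2b,h2c,h2d,h2e⟩ := h2
  obtain ⟨h3a,h3b,h3c,h3d,h3e⟩ := h3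
  obtain ⟨h4a,h4b,h4c,h4d,h4e⟩ := h4
  obtain ⟨h5a,h5b,h5c,h5d,h5e⟩ := h5
  obtain ⟨h6a,h6b,h6c,h6d,h6e⟩ := h6
  obtain ⟨h7a,h7b,h7c,h7d,h7e⟩ := h7
  obtain ⟨h8a,h8b,h8c,h8d,h8e⟩ := h8
  obtain ⟨h9a,h9b,h9c,h9d,h9e⟩ := h9
  obtain ⟨h10a,h10b,h10c,h10d,h10e⟩ := h10
  have h1a0 := h1a
  have h3a0 := h3a
  have h4a0 := h4a
  have h5a0 := h5a
  have h5b0 := h5b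
  have h7a0 := h7a
  have h7b0 := h7b
  have h8a0 := h8a
  have h8b0 := h8b
  have h9a0 := h9a
  have h9b0 := h9b
  have h10a0 := h10a
  have h10b0 := h10b
  have h10c0 := h10c
  have h10d0 := h10d
  have h10e0 := h10e
  field_simp at h3a
  field_simp at h4a
  field_simp at h5b
  have hB5 : z1 * d2 * k * (x1 * (z1 * d1) * (z1 * d2 * k) + y1 * (z2 * (z1 * d1 + b1 * d2)) * d2 * k) *
      (z1 * d1 + b1 * d2) ≠ 0 :=
    mul_ne_zero (mul_ne_zero (mul_ne_zero (mul_ne_zero h2b h2c) hk) (by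
        have h := (div_ne_zero_iff.mp h4a).1
        have e : x1 * (z1 * d1) * (z1 * d2 * k) + y1 * (z2 * (z1 * d1 + b1 * d2)) * d2 * k =
            d2 * k * (x1 * z1 ^ 2 * d1 + y1 * z2 * (z1 * d1 + b1 * d2)) := by ring
        rw [e]; exact mul_ne_zero (mul_ne_zero h2c hk) h)) h2a
  field_simp at h5a
  field_simp at h7a
  field_simp at h8a
  have hB9 : x1 * z2 * (k * ((x1 * z1 + y1 * z2) * k) * (x1 * z1 * d2)) ≠ 0 :=
    mul_ne_zero (mul_ne_zero h6b h6c)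
      (mul_ne_zero (mul_ne_zero hk (mul_ne_zero h6a hk)) (mul_ne_zero (mul_ne_zero h6b h2b) h2c))
  field_simp at h9a
  field_simp at h10a
  refine Prod.ext ?_ (Prod.ext ?_ (Prod.ext ?_ (Prod.ext ?_ (Prod.ext ?_ (Prod.ext ?_
    (Prod.ext ?_ (Prod.ext ?_ (Prod.ext ?_ ?_)))))))) <;>
    simp only [Prod.mk.injEq] <;> constructor <;> try trivial
  -- 1L
  · rw [div_eq_div_iff h5a0 h7a0]
    field_simp
    have hA := (div_ne_zero_iff.mp h4a).1
    have hB : y1 * z2 * (z1 * d1 + b1 * d2) + z1 * d2 * a1 * b2 ≠ 0 := by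
      intro h0; apply h3a0; field_simp; linear_combination h0
    have hC : z1 * x1 + y1 * z2 ≠ 0 := by rwa [mul_comm z1 x1]
    rw [div_add_div _ _ hA hB, mul_div_assoc', div_eq_div_iff (mul_ne_zero hA hB) (mul_ne_zero hA hB)]
    ring
  -- 2L
  · field_simp
    ring
  -- 3L
  · rw [div_eq_div_iff (mul_ne_zero h5b0 h6c) h9a0]
    field_simp
    have hA := (div_ne_zero_iff.mp h4a).1
    have hB : y1 * z2 * (z1 * d1 + b1 * d2) + z1 * d2 * a1 * b2 ≠ 0 := by
      intro h0; apply h3a0; field_simp; linear_combination h0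
    have hC : z1 * x1 + y1 * z2 ≠ 0 := by rwa [mul_comm z1 x1]
    field_simp
    ring
  -- 4L
  · field_simp
  -- 5L
  · field_simp
  -- 6L
  · rw [div_eq_div_iff (mul_ne_zero h6b h2c) hk]
    field_simp
    ring
  -- 7L
  · field_simp
  -- 8L
  · rw [div_eq_div_iff (mul_ne_zero h3b h2e) (mul_ne_zero h9b0 h2e)]
    field_simp
    have hA := (div_ne_zero_iff.mp h4a).1
    have hB : y1 * z2 * (z1 * d1 + b1 * d2) + z1 * d2 * a1 * b2 ≠ 0 := by
      intro h0; apply h3a0; field_simp; linear_combination h0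
    have hC : z1 * x1 + y1 * z2 ≠ 0 := by rwa [mul_comm z1 x1]
    field_simp
    ring
  -- 9L
  · rw [div_eq_div_iff h3d (mul_ne_zero h10b0 h10c0)]
    field_simp
  -- 10L
  · field_simp
  -- 10R
  · field_simp
end

section
/- The Hirota map T(x,y,z) = (xy/(x+z), x+z, yz/(x+z)) satisfies the local Yang–Baxter equation L³₁₂(u) L³₁₃(v) L³₂₃(w) = L³₂₃(z) L³₁₃(y) L³₁₂(x), where (u,v,w) = T(x,y,z) and L(x) is the 2×2 matrix with rows (x, 1) and (1, 0), provided x+z ≠ 0. -/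
open Matrix

/-- Embedding of `L(x) = [[x,1],[1,0]]` into rows/columns (1,2) of the 3×3 identity. -/
noncomputable def hirotaL12 (x : ℂ) : Matrix (Fin 3) (Fin 3) ℂ :=
  !![x, 1, 0; 1, 0, 0; 0, 0, 1]

/-- Embedding of `L(x) = [[x,1],[1,0]]` into rows/columns (1,3) of the 3×3 identity. -/
noncomputable def hirotaL13 (x : ℂ) : Matrix (Fin 3) (Fin 3) ℂ :=
  !![x, 0, 1; 0, 1, 0; 1, 0, 0]

/-- Embedding of `L(x) = [[x,1],[1,0]]` into rows/columns (2,3) of the 3×3 identity. -/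
noncomputable def hirotaL23 (x : ℂ) : Matrix (Fin 3) (Fin 3) ℂ :=
  !![1, 0, 0; 0, x, 1; 0, 1, 0]

/-- The Hirota map satisfies the local Yang–Baxter equation
`L³₁₂(u) L³₁₃(v) L³₂₃(w) = L³₂₃(z) L³₁₃(y) L³₁₂(x)` with
`(u,v,w) = (xy/(x+z), x+z, yz/(x+z))`, provided `x + z ≠ 0`. -/
theorem hirota_local_yang_baxter (x y z : ℂ) (h : x + z ≠ 0) :
    hirotaL12 (x * y / (x + z)) * hirotaL13 (x + z) * hirotaL23 (y * z / (x + z))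
      = hirotaL23 z * hirotaL13 y * hirotaL12 x := by
  simp only [hirotaL12, hirotaL13, hirotaL23]
  ext i j
  fin_cases i <;> fin_cases j <;>
    simp [Matrix.mul_apply, Fin.sum_univ_succ] <;> field_simp <;> ring
end

section
/- The map S₁ of the Hirota-type 4-simplex extension preserves the functions I₁ = x₁y₁, I₂ = x₂y₂, I₃ = x₂+y₂, I₄ = z₂t₂, I₅ = z₂+t₂, and I₆ = x₂z₂t₁; that is, each Iⱼ composed with S₁ equals Iⱼ, wherever the denominators are nonzero. -/
/-- The Hirota-type 4-simplex map `S₁` on `ℂ⁸`. -/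
noncomputable def hirotaS1 :
    ℂ × ℂ × ℂ × ℂ × ℂ × ℂ × ℂ × ℂ → ℂ × ℂ × ℂ × ℂ × ℂ × ℂ × ℂ × ℂ :=
  fun (x1, x2, y1, y2, z1, z2, t1, t2) =>
    (x1 * y1 * z2 / (x2 * z1 + x1 * z2), y2,
     (x2 * z1 + x1 * z2) / z2, x2,
     t2 * x2 * y1 * z1 / (y2 * (x2 * z1 + x1 * z2)), t2,
     t1 * x2 * z2 / (t2 * y2), z2)

/-- The map `S₁` preserves the functions `I₁ = x₁y₁`, `I₂ = x₂y₂`,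
`I₃ = x₂ + y₂`, `I₄ = z₂t₂`, `I₅ = z₂ + t₂` and `I₆ = x₂z₂t₁`,
wherever the denominators are nonzero. -/
theorem hirotaS1_invariants (x1 x2 y1 y2 z1 z2 t1 t2 : ℂ)
    (hD : x2 * z1 + x1 * z2 ≠ 0) (hz2 : z2 ≠ 0) (hy2 : y2 ≠ 0) (ht2 : t2 ≠ 0) :
    (fun (p : ℂ × ℂ × ℂ × ℂ × ℂ × ℂ × ℂ × ℂ) => p.1 * p.2.2.1)
        (hirotaS1 (x1, x2, y1, y2, z1, z2, t1, t2)) = x1 * y1 ∧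
    (fun (p : ℂ × ℂ × ℂ × ℂ × ℂ × ℂ × ℂ × ℂ) => p.2.1 * p.2.2.2.1)
        (hirotaS1 (x1, x2, y1, y2, z1, z2, t1, t2)) = x2 * y2 ∧
    (fun (p : ℂ × ℂ × ℂ × ℂ × ℂ × ℂ × ℂ × ℂ) => p.2.1 + p.2.2.2.1)
        (hirotaS1 (x1, x2, y1, y2, z1, z2, t1, t2)) = x2 + y2 ∧
    (fun (p : ℂ × ℂ × ℂ × ℂ × ℂ × ℂ × ℂ × ℂ) => p.2.2.2.2.2.1 * p.2.2.2.2.2.2.2)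
        (hirotaS1 (x1, x2, y1, y2, z1, z2, t1, t2)) = z2 * t2 ∧
    (fun (p : ℂ × ℂ × ℂ × ℂ × ℂ × ℂ × ℂ × ℂ) => p.2.2.2.2.2.1 + p.2.2.2.2.2.2.2)
        (hirotaS1 (x1, x2, y1, y2, z1, z2, t1, t2)) = z2 + t2 ∧
    (fun (p : ℂ × ℂ × ℂ × ℂ × ℂ × ℂ × ℂ × ℂ) => p.2.1 * p.2.2.2.2.2.1 * p.2.2.2.2.2.2.1)
        (hirotaS1 (x1, x2, y1, y2, z1, z2, t1, t2)) = x2 * z2 * t1 := by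
  refine ⟨?_, ?_, ?_, ?_, ?_, ?_⟩ <;>
    · simp only [hirotaS1]
      try field_simp
      try ring
end

section
/- The map S₁(x₁,x₂,y₁,y₂,z₁,z₂,t₁,t₂) = (x₁y₁z₂/(x₂z₁+x₁z₂), y₂, (x₂z₁+x₁z₂)/z₂, x₂, t₂x₂y₁z₁/(y₂(x₂z₁+x₁z₂)), t₂, t₁x₂z₂/(t₂y₂), z₂) is involutive: S₁ ∘ S₁ = id wherever all denominators occurring in the composition are nonzero. -/
/-- All denominators occurring in `S₁` are nonzero. -/
def hirotaS1Ok : ℂ × ℂ × ℂ × ℂ × ℂ × ℂ × ℂ × ℂ → Prop :=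
  fun (x1, x2, _y1, y2, z1, z2, _t1, t2) =>
    x2 * z1 + x1 * z2 ≠ 0 ∧ z2 ≠ 0 ∧ y2 ≠ 0 ∧ t2 ≠ 0

/-- `S₁` is involutive: `S₁ ∘ S₁ = id` wherever all denominators occurring
in the composition are nonzero. -/
theorem hirotaS1_involutive (p : ℂ × ℂ × ℂ × ℂ × ℂ × ℂ × ℂ × ℂ)
    (h1 : hirotaS1Ok p) (h2 : hirotaS1Ok (hirotaS1 p)) :
    hirotaS1 (hirotaS1 p) = p := by
  obtain ⟨x1, x2, y1, y2, z1, z2, t1, t2⟩ := p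
  obtain ⟨hA, hz2, hy2, ht2⟩ := h1
  simp only [hirotaS1, hirotaS1Ok] at h2 ⊢
  obtain ⟨hB, -, hx2, -⟩ := h2
  have hy1 : y1 ≠ 0 := by
    intro h; apply hB
    subst h; field_simp; simp
  have hC : y2 * (t2 * x2 * y1 * z1 / (y2 * (x2 * z1 + x1 * z2))) +
      x1 * y1 * z2 / (x2 * z1 + x1 * z2) * t2 = t2 * y1 := by
    field_simp
  rw [hC]
  simp only [Prod.mk.injEq]
  refine ⟨?_, trivial, ?_, trivial, ?_, trivial, ?_, trivial⟩ <;>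
    field_simp <;> rw [mul_comm z2 x1, mul_div_cancel_right₀ _ hA]
end

section
/- The map Ŝ satisfies the local tetrahedron (Lax) equation K⁶₁₂₃(u₁,u₂) K⁶₁₄₅(v₁,v₂) K⁶₂₄₆(w₁,w₂) K⁶₃₅₆(r₁,r₂) = K⁶₃₅₆(t₁,t₂) K⁶₂₄₆(z₁,z₂) K⁶₁₄₅(y₁,y₂) K⁶₁₂₃(x₁,x₂) with K(x₁,x₂) the 3×3 matrix with rows (x₁, 1, 0), (1/x₂, 0, 0), (0, 0, x₂), where (u₁,u₂,v₁,v₂,w₁,w₂,r₁,r₂) = Ŝ(x₁,x₂,y₁,y₂,z₁,z₂,t₁,t₂), for all x,y,z,t with nonzero second components and x₁x₂+y₂z₁ ≠ 0. -/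
open Matrix
set_option maxHeartbeats 4000000

/-- Embedding of `K(x₁,x₂) = [[x₁,1,0],[1/x₂,0,0],[0,0,x₂]]` into rows/columns
(1,2,3) of the 6×6 identity. -/
noncomputable def K123 (a b : ℂ) : Matrix (Fin 6) (Fin 6) ℂ :=
  !![a, 1, 0, 0, 0, 0;
     1/b, 0, 0, 0, 0, 0;
     0, 0, b, 0, 0, 0;
     0, 0, 0, 1, 0, 0;
     0, 0, 0, 0, 1, 0;
     0, 0, 0, 0, 0, 1]

/-- Embedding of `K(x₁,x₂)` into rows/columns (1,4,5) of the 6×6 identity. -/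
noncomputable def K145 (a b : ℂ) : Matrix (Fin 6) (Fin 6) ℂ :=
  !![a, 0, 0, 1, 0, 0;
     0, 1, 0, 0, 0, 0;
     0, 0, 1, 0, 0, 0;
     1/b, 0, 0, 0, 0, 0;
     0, 0, 0, 0, b, 0;
     0, 0, 0, 0, 0, 1]

/-- Embedding of `K(x₁,x₂)` into rows/columns (2,4,6) of the 6×6 identity. -/
noncomputable def K246 (a b : ℂ) : Matrix (Fin 6) (Fin 6) ℂ :=
  !![1, 0, 0, 0, 0, 0;
     0, a, 0, 1, 0, 0;
     0, 0, 1, 0, 0, 0;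
     0, 1/b, 0, 0, 0, 0;
     0, 0, 0, 0, 1, 0;
     0, 0, 0, 0, 0, b]

/-- Embedding of `K(x₁,x₂)` into rows/columns (3,5,6) of the 6×6 identity. -/
noncomputable def K356 (a b : ℂ) : Matrix (Fin 6) (Fin 6) ℂ :=
  !![1, 0, 0, 0, 0, 0;
     0, 1, 0, 0, 0, 0;
     0, 0, a, 0, 1, 0;
     0, 0, 0, 1, 0, 0;
     0, 0, 1/b, 0, 0, 0;
     0, 0, 0, 0, 0, b]

set_option maxHeartbeats 1000000

@[simp] lemma cons_val_five' {α : Type*} {m : ℕ}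
    (x : α) (u : Fin (m+5) → α) :
    Matrix.vecCons x u 5 =
      Matrix.vecHead (Matrix.vecTail (Matrix.vecTail (Matrix.vecTail (Matrix.vecTail u)))) :=
  rfl

lemma prodP (a b c d e f g h : ℂ) :
    K123 a b * K145 c d * K246 e f * K356 g h =
  !![a*c, e + a*(1/f), 0, 1, 0, 0;
     (1/b)*c, (1/b)*(1/f), 0, 0, 0, 0;
     0, 0, b*g, 0, b, 0;
     1/d, 0, 0, 0, 0, 0;
     0, 0, d*(1/h), 0, 0, 0;
     0, 0, 0, 0, 0, f*h] := by
  have h1 : K123 a b * K145 c d =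
    !![a*c, 1, 0, a, 0, 0;
       (1/b)*c, 0, 0, 1/b, 0, 0;
       0, 0, b, 0, 0, 0;
       1/d, 0, 0, 0, 0, 0;
       0, 0, 0, 0, d, 0;
       0, 0, 0, 0, 0, 1] := by
    ext i j
    fin_cases i <;> fin_cases j <;>
      simp [K123, K145, Matrix.mul_apply, Fin.sum_univ_six, Matrix.vecHead, Matrix.vecTail]
  have h2 : K123 a b * K145 c d * K246 e f =
    !![a*c, e + a*(1/f), 0, 1, 0, 0;
       (1/b)*c, (1/b)*(1/f), 0, 0, 0, 0;
       0, 0, b, 0, 0, 0;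
       1/d, 0, 0, 0, 0, 0;
       0, 0, 0, 0, d, 0;
       0, 0, 0, 0, 0, f] := by
    rw [h1]
    ext i j
    fin_cases i <;> fin_cases j <;>
      simp [K246, Matrix.mul_apply, Fin.sum_univ_six, Matrix.vecHead, Matrix.vecTail]
  rw [h2]
  ext i j
  fin_cases i <;> fin_cases j <;>
    simp [K356, Matrix.mul_apply, Fin.sum_univ_six, Matrix.vecHead, Matrix.vecTail]

lemma prodQ (a b c d e f g h : ℂ) :
    K356 g h * K246 e f * K145 c d * K123 a b =
  !![c*a, c, 0, 1, 0, 0;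
     (1/d)*a + e*(1/b), 1/d, 0, 0, 0, 0;
     0, 0, g*b, 0, d, 0;
     (1/f)*(1/b), 0, 0, 0, 0, 0;
     0, 0, (1/h)*b, 0, 0, 0;
     0, 0, 0, 0, 0, h*f] := by
  have h1 : K356 g h * K246 e f =
    !![1, 0, 0, 0, 0, 0;
       0, e, 0, 1, 0, 0;
       0, 0, g, 0, 1, 0;
       0, 1/f, 0, 0, 0, 0;
       0, 0, 1/h, 0, 0, 0;
       0, 0, 0, 0, 0, h*f] := by
    ext i j
    fin_cases i <;> fin_cases j <;>
      simp [K356, K246, Matrix.mul_apply, Fin.sum_univ_six, Matrix.vecHead, Matrix.vecTail]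
  have h2 : K356 g h * K246 e f * K145 c d =
    !![c, 0, 0, 1, 0, 0;
       1/d, e, 0, 0, 0, 0;
       0, 0, g, 0, d, 0;
       0, 1/f, 0, 0, 0, 0;
       0, 0, 1/h, 0, 0, 0;
       0, 0, 0, 0, 0, h*f] := by
    rw [h1]
    ext i j
    fin_cases i <;> fin_cases j <;>
      simp [K145, Matrix.mul_apply, Fin.sum_univ_six, Matrix.vecHead, Matrix.vecTail]
  rw [h2]
  ext i j
  fin_cases i <;> fin_cases j <;>
    simp [K123, Matrix.mul_apply, Fin.sum_univ_six, Matrix.vecHead, Matrix.vecTail]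

/-- The Hirota-type map `Ŝ` satisfies the local tetrahedron (Lax) equation for
`K(x₁,x₂) = [[x₁,1,0],[1/x₂,0,0],[0,0,x₂]]`. -/
theorem hirotaShat_lax (x1 x2 y1 y2 z1 z2 t1 t2 : ℂ)
    (hx2 : x2 ≠ 0) (hy2 : y2 ≠ 0) (hz2 : z2 ≠ 0) (ht2 : t2 ≠ 0)
    (hD : x1 * x2 + y2 * z1 ≠ 0) :
    K123 (x1 * x2 * y1 / (x1 * x2 + y2 * z1)) y2
        * K145 ((x1 * x2 + y2 * z1) / x2) (x2 * z2)
        * K246 (y1 * y2 * z1 / (x1 * x2 + y2 * z1)) 1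
        * K356 (t1 * x2 / y2) (t2 * z2)
      = K356 t1 t2 * K246 z1 z2 * K145 y1 y2 * K123 x1 x2 := by
  rw [prodP, prodQ]
  ext i j
  fin_cases i <;> fin_cases j <;>
    simp [Matrix.vecHead, Matrix.vecTail] <;> field_simp <;> ring
end

section
/- The map S₂ (electric network type) preserves the functions J₁ = x₁y₁, J₂ = x₂y₂, J₃ = z₁t₁, and J₄ = z₁+t₁: each composed with S₂ equals itself wherever denominators are nonzero. Moreover, these four invariants are functionally independent at generic points. -/
/-- The denominator `D = x₁x₂ + z₁z₂ + x₁x₂y₁y₂z₁z₂` of the electric network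
type 4-simplex map, with coordinates `(x₁,x₂,y₁,y₂,z₁,z₂,t₁,t₂) = (p 0, …, p 7)`. -/
noncomputable def enD (p : Fin 8 → ℂ) : ℂ :=
  p 0 * p 1 + p 4 * p 5 + p 0 * p 1 * p 2 * p 3 * p 4 * p 5

/-- The electric network type 4-simplex map `S₂` on `ℂ⁸`. -/
noncomputable def enS2 (p : Fin 8 → ℂ) : Fin 8 → ℂ :=
  ![p 0 * p 2, p 1 * p 3 / enD p, 1, enD p,
    p 6, p 2 * p 3 * p 4 * p 5 / (p 6 * enD p), p 4, p 6 * p 7 / p 4]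

/-- `J₁ = x₁y₁`. -/
noncomputable def enJ1 (p : Fin 8 → ℂ) : ℂ := p 0 * p 2
/-- `J₂ = x₂y₂`. -/
noncomputable def enJ2 (p : Fin 8 → ℂ) : ℂ := p 1 * p 3
/-- `J₃ = z₁t₁`. -/
noncomputable def enJ3 (p : Fin 8 → ℂ) : ℂ := p 4 * p 6
/-- `J₄ = z₁ + t₁`. -/
noncomputable def enJ4 (p : Fin 8 → ℂ) : ℂ := p 4 + p 6

/-- `S₂` preserves `J₁ = x₁y₁`, `J₂ = x₂y₂`, `J₃ = z₁t₁` and `J₄ = z₁+t₁`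
wherever denominators are nonzero; moreover these four invariants are
functionally independent at some point (their gradients are linearly
independent there). -/
theorem enS2_invariants_and_independence :
    (∀ p : Fin 8 → ℂ, enD p ≠ 0 → p 6 ≠ 0 → p 4 ≠ 0 →
      enJ1 (enS2 p) = enJ1 p ∧ enJ2 (enS2 p) = enJ2 p ∧
      enJ3 (enS2 p) = enJ3 p ∧ enJ4 (enS2 p) = enJ4 p) ∧
    ∃ p : Fin 8 → ℂ,
      LinearIndependent ℂ
        ![fderiv ℂ enJ1 p, fderiv ℂ enJ2 p, fderiv ℂ enJ3 p, fderiv ℂ enJ4 p] := by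
  constructor
  · intro p hD h6 h4
    refine ⟨?_, ?_, ?_, ?_⟩
    · simp [enJ1, enS2]
    · simp only [enJ2, enS2]
      simp only [Matrix.cons_val_one, Matrix.head_cons, Matrix.cons_val_three]
      exact div_mul_cancel₀ _ hD
    · have : enS2 p 4 = p 6 := rfl
      have h2 : enS2 p 6 = p 4 := rfl
      simp only [enJ3, this, h2]; ring
    · have : enS2 p 4 = p 6 := rfl
      have h2 : enS2 p 6 = p 4 := rfl
      simp only [enJ4, this, h2]; ring
  · set p₀ : Fin 8 → ℂ := fun i => if i = 6 then 2 else 1 with hp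
    refine ⟨p₀, ?_⟩
    have hpr : ∀ i : Fin 8, HasFDerivAt (fun p : Fin 8 → ℂ => p i)
        (ContinuousLinearMap.proj i : (Fin 8 → ℂ) →L[ℂ] ℂ) p₀ := fun i =>
      (ContinuousLinearMap.proj i : (Fin 8 → ℂ) →L[ℂ] ℂ).hasFDerivAt
    have h1 : fderiv ℂ enJ1 p₀ = p₀ 0 • ContinuousLinearMap.proj 2 + p₀ 2 • ContinuousLinearMap.proj 0 :=
      (((hpr 0).mul (hpr 2)) : HasFDerivAt enJ1 _ p₀).fderiv
    have h2 : fderiv ℂ enJ2 p₀ = p₀ 1 • ContinuousLinearMap.proj 3 + p₀ 3 • ContinuousLinearMap.proj 1 :=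
      (((hpr 1).mul (hpr 3)) : HasFDerivAt enJ2 _ p₀).fderiv
    have h3 : fderiv ℂ enJ3 p₀ = p₀ 4 • ContinuousLinearMap.proj 6 + p₀ 6 • ContinuousLinearMap.proj 4 :=
      (((hpr 4).mul (hpr 6)) : HasFDerivAt enJ3 _ p₀).fderiv
    have h4 : fderiv ℂ enJ4 p₀ = ContinuousLinearMap.proj (4 : Fin 8) + ContinuousLinearMap.proj (6 : Fin 8) :=
      (((hpr 4).add (hpr 6)) : HasFDerivAt enJ4 _ p₀).fderiv
    rw [h1, h2, h3, h4]
    rw [Fintype.linearIndependent_iff]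
    intro g hg
    have ha := fun v => congrArg (fun f : (Fin 8 → ℂ) →L[ℂ] ℂ => f v) hg
    simp only [Fin.sum_univ_four, Matrix.cons_val_zero, Matrix.cons_val_one,
      Matrix.head_cons, Matrix.cons_val_two, Matrix.tail_cons, Matrix.cons_val_three,
      ContinuousLinearMap.add_apply, ContinuousLinearMap.smul_apply,
      ContinuousLinearMap.proj_apply, ContinuousLinearMap.zero_apply, hp,
      smul_eq_mul] at ha
    have e0 := ha (Pi.single 0 1)
    have e1 := ha (Pi.single 1 1)
    have e4 := ha (Pi.single 4 1)
    have e6 := ha (Pi.single 6 1)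
    simp [Pi.single_apply] at e0 e1 e4 e6
    have hg2 : g 2 = 0 := by linear_combination e4 - e6
    have hg3 : g 3 = 0 := by linear_combination 2 * e6 - e4
    intro i
    fin_cases i <;> simp_all
end

section
/- The twelve-dimensional map (x₁,x₂,x₃,y₁,y₂,y₃,z₁,z₂,z₃,t₁,t₂,t₃) ↦ (y₁, y₂, x₁x₃z₂/(y₂z₁), x₁, x₂, (y₂y₃z₁ − x₁x₃z₂z₃)/x₁, y₁z₁/x₁, z₂, z₃, t₁x₂/y₂, t₂, t₃) satisfies the set-theoretical 4-simplex equation wherever all denominators are nonzero, and at (x₂,x₃,y₂,y₃,z₂,z₃,t₂,t₃) = (1,0,1,0,1,0,1,0) its nontrivial components reduce to the tetrahedron map (x,y,z) ↦ (y, x, yz/x). -/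
/-- The twelve-dimensional 4-simplex map on triples. -/
noncomputable def tripleS :
    (ℂ × ℂ × ℂ) × (ℂ × ℂ × ℂ) × (ℂ × ℂ × ℂ) × (ℂ × ℂ × ℂ) →
      (ℂ × ℂ × ℂ) × (ℂ × ℂ × ℂ) × (ℂ × ℂ × ℂ) × (ℂ × ℂ × ℂ) :=
  fun ((x1, x2, x3), (y1, y2, y3), (z1, z2, z3), (t1, t2, t3)) =>
    ((y1, y2, x1 * x3 * z2 / (y2 * z1)),
     (x1, x2, (y2 * y3 * z1 - x1 * x3 * z2 * z3) / x1),
     (y1 * z1 / x1, z2, z3),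
     (t1 * x2 / y2, t2, t3))

/-- All denominators occurring in the map are nonzero. -/
def tripleSOk :
    (ℂ × ℂ × ℂ) × (ℂ × ℂ × ℂ) × (ℂ × ℂ × ℂ) × (ℂ × ℂ × ℂ) → Prop :=
  fun ((x1, x2, x3), (y1, y2, y3), (z1, z2, z3), (t1, t2, t3)) =>
    y2 ≠ 0 ∧ z1 ≠ 0 ∧ x1 ≠ 0

private lemma auxQ (a2 y1 z1 b1 y2 b2 d1 : ℂ) (h3a : a2 ≠ 0) (h3c : y1 ≠ 0)
    (h2c : z1 ≠ 0) (h5b : b1 ≠ 0) (h4a : y2 ≠ 0) (h2a : b2 ≠ 0) (h2b : d1 ≠ 0) :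
    a2 * y1 * z1 * b1 * y2 * b2 * d1 ^ 2 *
      (a2⁻¹ * y1⁻¹ * z1⁻¹ * b1⁻¹ * y2⁻¹ * b2⁻¹ * d1⁻¹ ^ 2) = 1 := by
  field_simp

set_option maxHeartbeats 4000000 in
/-- The twelve-dimensional map satisfies the set-theoretical 4-simplex equation
wherever all denominators are nonzero, and at
`(x₂,x₃,y₂,y₃,z₂,z₃,t₂,t₃) = (1,0,1,0,1,0,1,0)` its nontrivial components reduce
to the tetrahedron map `(x,y,z) ↦ (y, x, yz/x)`. -/
theorem tripleS_four_simplex_and_reduction :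
    (∀ p : (ℂ × ℂ × ℂ) × (ℂ × ℂ × ℂ) × (ℂ × ℂ × ℂ) × (ℂ × ℂ × ℂ) × (ℂ × ℂ × ℂ) ×
        (ℂ × ℂ × ℂ) × (ℂ × ℂ × ℂ) × (ℂ × ℂ × ℂ) × (ℂ × ℂ × ℂ) × (ℂ × ℂ × ℂ),
      tripleSOk (proj479X p) →
      tripleSOk (proj368X (lift479X tripleS p)) →
      tripleSOk (proj2589 (lift368X tripleS (lift479X tripleS p))) →
      tripleSOk (proj1567 (lift2589 tripleS (lift368X tripleS (lift479X tripleS p)))) →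
      tripleSOk (proj1234 (lift1567 tripleS (lift2589 tripleS (lift368X tripleS (lift479X tripleS p))))) →
      tripleSOk (proj1234 p) →
      tripleSOk (proj1567 (lift1234 tripleS p)) →
      tripleSOk (proj2589 (lift1567 tripleS (lift1234 tripleS p))) →
      tripleSOk (proj368X (lift2589 tripleS (lift1567 tripleS (lift1234 tripleS p)))) →
      tripleSOk (proj479X (lift368X tripleS (lift2589 tripleS (lift1567 tripleS (lift1234 tripleS p))))) →
      lift1234 tripleS (lift1567 tripleS (lift2589 tripleS (lift368X tripleS (lift479X tripleS p))))
        = lift479X tripleS (lift368X tripleS (lift2589 tripleS (lift1567 tripleS (lift1234 tripleS p))))) ∧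
    (∀ x1 y1 z1 t1 : ℂ, x1 ≠ 0 → z1 ≠ 0 →
      tripleS ((x1, 1, 0), (y1, 1, 0), (z1, 1, 0), (t1, 1, 0))
        = ((y1, 1, 0), (x1, 1, 0), (y1 * z1 / x1, 1, 0), (t1, 1, 0))) := by
  constructor
  · rintro ⟨⟨x1,x2,x3⟩,⟨y1,y2,y3⟩,⟨z1,z2,z3⟩,⟨t1,t2,t3⟩,⟨a1,a2,a3⟩,⟨b1,b2,b3⟩,⟨c1,c2,c3⟩,⟨d1,d2,d3⟩,⟨e1,e2,e3⟩,⟨f1,f2,f3⟩⟩ h1 h2 h3 h4 h5 h6 h7 h8 h9 h10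
    simp only [tripleS, tripleSOk, lift1234, lift1567, lift2589, lift368X, lift479X,
      proj1234, proj1567, proj2589, proj368X, proj479X, Prod.mk.injEq] at *
    obtain ⟨h1a, h1b, h1c⟩ := h1
    obtain ⟨h2a, h2b, h2c⟩ := h2
    obtain ⟨h3a, h3b, h3c⟩ := h3
    obtain ⟨h4a, h4b, h4c⟩ := h4
    obtain ⟨h5a, h5b, h5c⟩ := h5
    obtain ⟨h6a, h6b, h6c⟩ := h6
    obtain ⟨h7a, h7b, h7c⟩ := h7
    obtain ⟨h8a, h8b, h8c⟩ := h8
    obtain ⟨h9a, h9b, h9c⟩ := h9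
    obtain ⟨h10a, h10b, h10c⟩ := h10
    have hx2 : x2 ≠ 0 := fun h => h10c (by simp [h])
    and_intros <;> try (first | trivial | (field_simp <;> ring))
  · intro x1 y1 z1 t1 hx hz
    simp only [tripleS]
    norm_num
end
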